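/- Let k be a field and a < b, c < d in ℝ. Then Hom_underline(k[a,b), k[c,∞)) = 0, and Hom_underline(k[a,∞), k[b,c)) ≅ k[b−a, c−a). -/

import Mathlib

open CategoryTheory

noncomputable section
attribute [local instance] Classical.propDecidable
set_option linter.unusedSectionVars false

variable (R : Type) [Ring R] {P : Type} [Preorder P]

/-- Condition that a subset is order-convex. -/
def IsConvexSet (I : Set P) : Prop := ∀ ⦃x y z : P⦄, x ∈ I → z ∈ I → x ≤ y → y ≤ z → y ∈ I

/-- The value of the interval persistence module at a point. -/
def intervalObj (I : Set P) (a : P) : Submodule R R :=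
  if a ∈ I then (⊤ : Submodule R R) else ⊥

lemma intervalObj_eq_zero {I : Set P} {a : P} (h : a ∉ I) (x : intervalObj R I a) :
    x = 0 := by
  have hx := x.2
  simp only [intervalObj, if_neg h, Submodule.mem_bot] at hx
  exact Subtype.ext hx

/-- The structure map of the interval module between two degrees. -/
def intervalMapAux (I : Set P) (a b : P) :
    (intervalObj R I a) →ₗ[R] (intervalObj R I b) :=
  if h : a ∈ I ∧ b ∈ I then
    Submodule.inclusion (by simp [intervalObj, h.1, h.2])
  else 0

lemma intervalMapAux_coe {I : Set P} {a b : P} (ha : a ∈ I) (hb : b ∈ I)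
    (x : intervalObj R I a) : ((intervalMapAux R I a b x : R)) = (x : R) := by
  simp [intervalMapAux, ha, hb]

lemma intervalMapAux_of_not {I : Set P} {a b : P} (h : ¬(a ∈ I ∧ b ∈ I))
    (x : intervalObj R I a) : intervalMapAux R I a b x = 0 := by
  simp [intervalMapAux, h]

/-- The interval (indicator) persistence module of a convex set `I`,
as a functor from the preorder `P` to `R`-modules. -/
def intervalModule (I : Set P) (hI : IsConvexSet I) : P ⥤ ModuleCat R where
  obj a := ModuleCat.of R (intervalObj R I a)
  map {a b} f := ModuleCat.ofHom (intervalMapAux R I a b)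
  map_id a := by
    apply ModuleCat.hom_ext; apply LinearMap.ext; intro x
    by_cases h : a ∈ I
    · exact Subtype.ext (intervalMapAux_coe R h h x)
    · rw [intervalObj_eq_zero R h x]
      simp
  map_comp {a b c} f g := by
    apply ModuleCat.hom_ext; apply LinearMap.ext; intro x
    show intervalMapAux R I a c x = intervalMapAux R I b c (intervalMapAux R I a b x)
    by_cases ha : a ∈ I
    · by_cases hc : c ∈ I
      · have hb : b ∈ I := hI ha hc (leOfHom f) (leOfHom g)
        apply Subtype.ext
        rw [intervalMapAux_coe R ha hc, intervalMapAux_coe R hb hc,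
          intervalMapAux_coe R ha hb]
      · rw [intervalMapAux_of_not R (fun h => hc h.2),
          intervalMapAux_of_not R (fun h => hc h.2)]
    · rw [intervalObj_eq_zero R ha x]
      simp

end

lemma IsConvexSet.of_ordConnected {P : Type} [Preorder P] {s : Set P}
    (h : s.OrdConnected) : IsConvexSet s :=
  fun _ _ _ hx hz hxy hyz => h.out hx hz ⟨hxy, hyz⟩

open CategoryTheory

noncomputable section
variable (k : Type) [Field k]

/-- The translation functor `a ↦ a + s` on `(ℝ,≤)`. -/
def shiftFunctor' (s : ℝ) : ℝ ⥤ ℝ :=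
  Monotone.functor (f := fun a => a + s) (fun _ _ h => add_le_add_left h s)

/-- For `s ≤ t`, the canonical natural transformation `N(s) ⟶ N(t)` between shifts. -/
def shiftTrans (N : ℝ ⥤ ModuleCat k) {s t : ℝ} (h : s ≤ t) :
    shiftFunctor' s ⋙ N ⟶ shiftFunctor' t ⋙ N where
  app a := N.map (homOfLE (add_le_add_right h a))
  naturality {a b} f := by
    dsimp [shiftFunctor']
    rw [← N.map_comp, ← N.map_comp]
    congr 1

lemma shiftTrans_eq_id (N : ℝ ⥤ ModuleCat k) {s : ℝ} (h : s ≤ s) :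
    shiftTrans k N h = 𝟙 _ := by
  apply NatTrans.ext
  funext a
  show N.map (homOfLE (add_le_add_right h a)) = _
  rw [show (homOfLE (add_le_add_right h a) : a + s ⟶ a + s) = 𝟙 (a + s) from rfl, N.map_id]
  rfl

lemma shiftTrans_comp (N : ℝ ⥤ ModuleCat k) {s t u : ℝ} (h : s ≤ t) (h' : t ≤ u)
    (h'' : s ≤ u) :
    shiftTrans k N h ≫ shiftTrans k N h' = shiftTrans k N h'' := by
  apply NatTrans.ext
  funext a
  rw [NatTrans.comp_app]
  show N.map (homOfLE (add_le_add_right h a)) ≫ N.map (homOfLE (add_le_add_right h' a)) =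
    N.map (homOfLE (add_le_add_right h'' a))
  rw [← N.map_comp]
  congr 1

/-- The graded internal hom of persistence modules:
`Hom(M,N)_s = Hom(M, N(s))`, the space of natural transformations into the shift. -/
def homUnderline (M N : ℝ ⥤ ModuleCat k) : ℝ ⥤ ModuleCat k where
  obj s := ModuleCat.of k (M ⟶ shiftFunctor' s ⋙ N)
  map {s t} f := ModuleCat.ofHom
    { toFun := fun α => α ≫ shiftTrans k N (leOfHom f)
      map_add' := fun α β => Preadditive.add_comp _ _ _ _ _ _
      map_smul' := fun c α => Linear.smul_comp _ _ _ _ _ _ }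
  map_id s := by
    apply ModuleCat.hom_ext; apply LinearMap.ext; intro α
    show α ≫ shiftTrans k N (leOfHom (𝟙 s)) = α
    rw [shiftTrans_eq_id, Category.comp_id]
  map_comp {s t u} f g := by
    apply ModuleCat.hom_ext; apply LinearMap.ext; intro α
    show α ≫ shiftTrans k N (leOfHom (f ≫ g)) =
      (α ≫ shiftTrans k N (leOfHom f)) ≫ shiftTrans k N (leOfHom g)
    rw [Category.assoc, shiftTrans_comp k N (leOfHom f) (leOfHom g) (leOfHom (f ≫ g))]

end


-- ===== auxiliary development =====
namespace HomUnderlineAux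
open CategoryTheory

noncomputable section
attribute [local instance] Classical.propDecidable
variable (k : Type) [Field k]

/-- A "cross" map between two interval objects, identity on the underlying field
when both points are in the respective sets, zero otherwise. -/
def crossMap (I J : Set ℝ) (x y : ℝ) : (intervalObj k I x) →ₗ[k] (intervalObj k J y) :=
  if h : x ∈ I ∧ y ∈ J then
    { toFun := fun v => ⟨(v : k), by simp [intervalObj, h.2]⟩
      map_add' := fun v w => rfl
      map_smul' := fun c v => rfl }
  else 0

lemma crossMap_coe {I J : Set ℝ} {x y : ℝ} (hx : x ∈ I) (hy : y ∈ J)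
    (v : intervalObj k I x) : ((crossMap k I J x y v : k)) = (v : k) := by
  simp [crossMap, hx, hy]

lemma crossMap_of_not {I J : Set ℝ} {x y : ℝ} (h : ¬(x ∈ I ∧ y ∈ J))
    (v : intervalObj k I x) : crossMap k I J x y v = 0 := by
  simp [crossMap, h]

variable (a b c : ℝ)

local notation "M" => intervalModule k (Set.Ici a) (IsConvexSet.of_ordConnected Set.ordConnected_Ici)
local notation "N" => intervalModule k (Set.Ico b c) (IsConvexSet.of_ordConnected Set.ordConnected_Ico)
local notation "T" => intervalModule k (Set.Ico (b - a) (c - a)) (IsConvexSet.of_ordConnected Set.ordConnected_Ico)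

lemma mem_shift_iff (s : ℝ) : s ∈ Set.Ico (b - a) (c - a) ↔ a + s ∈ Set.Ico b c := by
  rw [Set.mem_Ico, Set.mem_Ico]
  constructor <;> exact fun h => ⟨by linarith [h.1], by linarith [h.2]⟩

/-- The canonical natural transformation from `k[a,∞)` to the `s`-shift of `k[b,c)`. -/
def crossNat (s : ℝ) (hs : b - a ≤ s) : (M) ⟶ shiftFunctor' s ⋙ (N) where
  app x := ModuleCat.ofHom (crossMap k (Set.Ici a) (Set.Ico b c) x (x + s))
  naturality {x y} f := by
    ext v
    show crossMap k (Set.Ici a) (Set.Ico b c) y (y + s)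
        (intervalMapAux k (Set.Ici a) x y v)
      = intervalMapAux k (Set.Ico b c) (x + s) (y + s)
        (crossMap k (Set.Ici a) (Set.Ico b c) x (x + s) v)
    by_cases hx : x ∈ Set.Ici a
    · have hxy : x ≤ y := leOfHom f
      have hy : y ∈ Set.Ici a := le_trans hx hxy
      by_cases hys : y + s ∈ Set.Ico b c
      · have hxs : x + s ∈ Set.Ico b c :=
          ⟨by have := hx.out; linarith, by have := hys.2; linarith⟩
        apply Subtype.ext
        erw [crossMap_coe k hy hys, intervalMapAux_coe k hx hy,
          intervalMapAux_coe k hxs hys, crossMap_coe k hx hxs]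
      · rw [crossMap_of_not k (fun h => hys h.2),
          intervalMapAux_of_not k (fun h => hys h.2)]
    · rw [intervalObj_eq_zero k hx v, map_zero, map_zero, map_zero, map_zero]

/-- The distinguished element `1` of the interval object at a point of the set. -/
def one : intervalObj k (Set.Ici a) a := ⟨1, by simp [intervalObj, Set.mem_Ici]⟩

def etaS (s : ℝ) : (M) ⟶ shiftFunctor' s ⋙ (N) :=
  if hs : b - a ≤ s then crossNat k a b c s hs else 0

/-- Evaluation at `a`. -/
def appA (s : ℝ) (α : (M) ⟶ shiftFunctor' s ⋙ (N)) : intervalObj k (Set.Ico b c) (a + s) :=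
  α.app a (one k a)

lemma appA_add (s : ℝ) (α β : (M) ⟶ shiftFunctor' s ⋙ (N)) :
    appA k a b c s (α + β) = appA k a b c s α + appA k a b c s β := by
  unfold appA
  rw [NatTrans.app_add]
  rfl

lemma appA_smul (s : ℝ) (r : k) (α : (M) ⟶ shiftFunctor' s ⋙ (N)) :
    appA k a b c s (r • α) = r • appA k a b c s α := by
  unfold appA
  rw [NatTrans.app_smul]
  rfl

lemma appA_mem (s : ℝ) (α : (M) ⟶ shiftFunctor' s ⋙ (N)) :
    (appA k a b c s α : k) ∈ intervalObj k (Set.Ico (b - a) (c - a)) s := by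
  by_cases hs : s ∈ Set.Ico (b - a) (c - a)
  · simp [intervalObj, hs]
  · have h' : a + s ∉ Set.Ico b c := fun h => hs ((mem_shift_iff a b c s).mpr h)
    rw [intervalObj_eq_zero k h' (appA k a b c s α)]
    exact Submodule.zero_mem _

/-- Evaluation at `a` as a linear map. -/
def evalMap (s : ℝ) :
    ((M) ⟶ shiftFunctor' s ⋙ (N)) →ₗ[k] intervalObj k (Set.Ico (b - a) (c - a)) s where
  toFun α := ⟨(appA k a b c s α : k), appA_mem k a b c s α⟩
  map_add' α β := by
    apply Subtype.ext
    show ((appA k a b c s (α + β) : k)) = _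
    rw [appA_add]
    rfl
  map_smul' r α := by
    apply Subtype.ext
    show ((appA k a b c s (r • α) : k)) = _
    rw [appA_smul]
    rfl

def coevalMap (s : ℝ) :
    intervalObj k (Set.Ico (b - a) (c - a)) s →ₗ[k] ((M) ⟶ shiftFunctor' s ⋙ (N)) where
  toFun v := (v : k) • etaS k a b c s
  map_add' v w := by
    show ((v + w : _) : k) • etaS k a b c s = _
    rw [Submodule.coe_add, add_smul]
  map_smul' r v := by
    show ((r • v : _) : k) • etaS k a b c s = _
    rw [Submodule.coe_smul, smul_eq_mul, mul_smul]
    rfl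

lemma hom_app_eq (s : ℝ) (α : (M) ⟶ shiftFunctor' s ⋙ (N)) (x : ℝ)
    (v : intervalObj k (Set.Ici a) x) :
    α.app x v = (appA k a b c s α : k) • (etaS k a b c s).app x v := by
  by_cases hx : x ∈ Set.Ici a
  · -- use naturality from a to x
    have hax : (a : ℝ) ≤ x := hx
    have hnat := congrArg (fun (f : (M).obj a ⟶ (shiftFunctor' s ⋙ (N)).obj x) =>
      f ((v : k) • one k a)) (α.naturality (homOfLE hax))
    have hMv : intervalMapAux k (Set.Ici a) a x ((v : k) • one k a) = v := by
      apply Subtype.ext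
      rw [intervalMapAux_coe k (Set.self_mem_Ici) hx]
      show (v : k) * 1 = (v : k)
      rw [mul_one]
    have key : α.app x v
        = (v : k) • intervalMapAux k (Set.Ico b c) (a + s) (x + s) (α.app a (one k a)) := by
      have h1 : α.app x (intervalMapAux k (Set.Ici a) a x ((v : k) • one k a))
          = intervalMapAux k (Set.Ico b c) (a + s) (x + s) (α.app a ((v : k) • one k a)) :=
        hnat
      rw [hMv] at h1
      erw [h1, map_smul, map_smul]
    rw [key]
    unfold etaS
    by_cases hs : b - a ≤ s
    · rw [dif_pos hs]
      show _ = (appA k a b c s α : k) • crossMap k (Set.Ici a) (Set.Ico b c) x (x + s) v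
      by_cases hxs : x + s ∈ Set.Ico b c
      · have has : a + s ∈ Set.Ico b c := ⟨by linarith, by have := hxs.2; have := hx.out; linarith⟩
        apply Subtype.ext
        erw [Submodule.coe_smul, Submodule.coe_smul, smul_eq_mul, smul_eq_mul,
          intervalMapAux_coe k has hxs, crossMap_coe k hx hxs, mul_comm]
        rfl
      · erw [intervalMapAux_of_not k (fun h => hxs h.2), crossMap_of_not k (fun h => hxs h.2),
          smul_zero, smul_zero]
    · rw [dif_neg hs]
      have has : a + s ∉ Set.Ico b c := fun h => hs (by have := h.1; linarith)
      have hz : (appA k a b c s α : k) = 0 := by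
        rw [show appA k a b c s α = 0 from intervalObj_eq_zero k has _]
        rfl
      rw [intervalObj_eq_zero k has (α.app a (one k a)), map_zero, smul_zero, hz, zero_smul]
      rfl
  · erw [intervalObj_eq_zero k hx v, map_zero, map_zero, smul_zero]

lemma hom_eq_smul (s : ℝ) (α : (M) ⟶ shiftFunctor' s ⋙ (N)) :
    α = (appA k a b c s α : k) • etaS k a b c s := by
  apply NatTrans.ext
  funext x
  apply ModuleCat.hom_ext
  apply LinearMap.ext
  intro v
  rw [NatTrans.app_smul]
  exact hom_app_eq k a b c s α x v

lemma appA_etaS (s : ℝ) (hs2 : s ∈ Set.Ico (b - a) (c - a)) :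
    (appA k a b c s (etaS k a b c s) : k) = 1 := by
  unfold appA etaS
  rw [dif_pos hs2.1]
  show ((crossMap k (Set.Ici a) (Set.Ico b c) a (a + s) (one k a) : k)) = 1
  rw [crossMap_coe k Set.self_mem_Ici ((mem_shift_iff a b c s).mp hs2)]
  rfl

/-- The linear equivalence between `Hom(k[a,∞), k[b,c))_s` and `k[b-a,c-a)_s`. -/
def homEquiv (s : ℝ) :
    ((M) ⟶ shiftFunctor' s ⋙ (N)) ≃ₗ[k] intervalObj k (Set.Ico (b - a) (c - a)) s :=
  { evalMap k a b c s with
    invFun := coevalMap k a b c s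
    left_inv := fun α => (hom_eq_smul k a b c s α).symm
    right_inv := fun v => by
      apply Subtype.ext
      show ((appA k a b c s ((v : k) • etaS k a b c s) : k)) = (v : k)
      rw [appA_smul]
      by_cases hs2 : s ∈ Set.Ico (b - a) (c - a)
      · rw [Submodule.coe_smul, smul_eq_mul, appA_etaS k a b c s hs2, mul_one]
      · rw [intervalObj_eq_zero k hs2 v]
        simp }

/-- The natural isomorphism `Hom(k[a,∞), k[b,c)) ≅ k[b-a,c-a)`. -/
def theIso : homUnderline k (M) (N) ≅ (T) := by
  refine NatIso.ofComponents (fun s => (homEquiv k a b c s).toModuleIso) ?_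
  intro s t f
  ext α
  show evalMap k a b c t ((homUnderline k (M) (N)).map f α)
    = intervalMapAux k (Set.Ico (b - a) (c - a)) s t (evalMap k a b c s α)
  have lhs : appA k a b c t ((homUnderline k (M) (N)).map f α)
      = intervalMapAux k (Set.Ico b c) (a + s) (a + t) (appA k a b c s α) := rfl
  apply Subtype.ext
  show ((appA k a b c t ((homUnderline k (M) (N)).map f α) : k)) = _
  rw [lhs]
  by_cases hst : s ∈ Set.Ico (b - a) (c - a) ∧ t ∈ Set.Ico (b - a) (c - a)
  · rw [intervalMapAux_coe k ((mem_shift_iff a b c s).mp hst.1)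
      ((mem_shift_iff a b c t).mp hst.2),
      intervalMapAux_coe k hst.1 hst.2]
    rfl
  · have hst' : ¬(a + s ∈ Set.Ico b c ∧ a + t ∈ Set.Ico b c) := fun h =>
      hst ⟨(mem_shift_iff a b c s).mpr h.1, (mem_shift_iff a b c t).mpr h.2⟩
    rw [intervalMapAux_of_not k hst', intervalMapAux_of_not k hst]
    rfl

end

section Part1
attribute [local instance] Classical.propDecidable
variable (k : Type) [Field k] (a b c s : ℝ)

local notation "M1" => intervalModule k (Set.Ico a b) (IsConvexSet.of_ordConnected Set.ordConnected_Ico)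
local notation "N1" => intervalModule k (Set.Ici c) (IsConvexSet.of_ordConnected Set.ordConnected_Ici)

lemma part1_app (hab : a < b) (α : (M1) ⟶ shiftFunctor' s ⋙ (N1)) (x : ℝ)
    (v : intervalObj k (Set.Ico a b) x) : α.app x v = 0 := by
  by_cases hx : x ∈ Set.Ico a b
  · by_cases hxs : x + s ∈ Set.Ici c
    · have hxb : x ≤ b := le_of_lt hx.2
      have hnat := congrArg (fun (f : (M1).obj x ⟶ (shiftFunctor' s ⋙ (N1)).obj b) => f v)
        (α.naturality (homOfLE hxb))
      have h1 : α.app b (intervalMapAux k (Set.Ico a b) x b v)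
          = intervalMapAux k (Set.Ici c) (x + s) (b + s) (α.app x v) := hnat
      have hb : b ∉ Set.Ico a b := fun h => lt_irrefl b h.2
      erw [intervalMapAux_of_not k (fun h => hb h.2) v, map_zero] at h1
      have hbs : b + s ∈ Set.Ici c := le_trans hxs.out (by linarith)
      apply Subtype.ext
      have h2 := congrArg Subtype.val h1.symm
      erw [intervalMapAux_coe k hxs hbs] at h2
      exact h2
    · exact intervalObj_eq_zero k hxs _
  · erw [intervalObj_eq_zero k hx v, map_zero]

lemma part1_eq_zero (hab : a < b) (α : (M1) ⟶ shiftFunctor' s ⋙ (N1)) : α = 0 := by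
  apply NatTrans.ext
  funext x
  apply ModuleCat.hom_ext
  apply LinearMap.ext
  intro v
  exact part1_app k a b c s hab α x v

end Part1
end HomUnderlineAux

open CategoryTheory in
/-- `Hom(k[a,b), k[c,∞)) = 0`, and `Hom(k[a,∞), k[b,c)) ≅ k[b−a, c−a)`. -/
theorem homUnderline_interval' (k : Type) [Field k] (a b c d : ℝ)
    (hab : a < b) (hcd : c < d) :
    Limits.IsZero
      (homUnderline k (intervalModule k (Set.Ico a b) (.of_ordConnected Set.ordConnected_Ico))
        (intervalModule k (Set.Ici c) (.of_ordConnected Set.ordConnected_Ici))) ∧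
    Nonempty
      (homUnderline k (intervalModule k (Set.Ici a) (.of_ordConnected Set.ordConnected_Ici))
          (intervalModule k (Set.Ico b c) (.of_ordConnected Set.ordConnected_Ico)) ≅
        intervalModule k (Set.Ico (b - a) (c - a))
          (.of_ordConnected Set.ordConnected_Ico)) := by
  constructor
  · apply Functor.isZero
    intro s
    have hsub : Subsingleton
        (intervalModule k (Set.Ico a b) (IsConvexSet.of_ordConnected Set.ordConnected_Ico) ⟶
          shiftFunctor' s ⋙
            intervalModule k (Set.Ici c) (IsConvexSet.of_ordConnected Set.ordConnected_Ici)) :=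
      ⟨fun α β => by
        rw [HomUnderlineAux.part1_eq_zero k a b c s hab α,
          HomUnderlineAux.part1_eq_zero k a b c s hab β]⟩
    exact @ModuleCat.isZero_of_subsingleton _ _ _ hsub
  · exact ⟨HomUnderlineAux.theIso k a b c⟩
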